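/- arXiv:2604.07249 — 3 statements merged into one kernel-verified Lean document; each statement's English description precedes it below -/
import Mathlib

section
/- Consider the controlled complex Kuramoto system ẋ_k = i ω_k x_k + σ ∑_j a_{kj} x_j + u_k with the switched feedforward control |u_k| = |f_k(x)|, φ_{u_k} = φ_{x_k} + (π/2)(1 + sign(f_k(x))), where f_k(x) = σ ∑_j a_{kj} |x_j| cos(φ_{x_j} − φ_{x_k}). If |x_k(0)| = 1 for all k, then |x_k(t)| = 1 for all t ≥ 0 and all k, and the arguments φ_{x_k} satisfy exactly the real Kuramoto equations φ̇_{x_k} = ω_k + σ ∑_j a_{kj} sin(φ_{x_j} − φ_{x_k}). -/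
open Complex

/-- Theorem 1 (switched feedforward control): under the control law
`|u_k| = |f_k(x)|`, `φ_{u_k} = φ_{x_k} + (π/2)(1 + sign f_k(x))`, if
`|x_k(0)| = 1` for all `k` then `|x_k(t)| = 1` for all `t ≥ 0`, and the
arguments satisfy exactly the real Kuramoto equations. -/
theorem stmt5 (N : ℕ) (ω : Fin N → ℝ) (σ : ℝ) (hσ : 0 < σ)
    (a : Fin N → Fin N → ℝ)
    (hA : ∀ k j, a k j = 0 ∨ a k j = 1) (hdiag : ∀ k, a k k = 0)
    (x : ℝ → Fin N → ℂ) (φ : ℝ → Fin N → ℝ)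
    (hne : ∀ t k, x t k ≠ 0)
    (hpolar : ∀ t k, x t k = (‖x t k‖ : ℂ) * Complex.exp (Complex.I * (φ t k : ℂ)))
    (hφ : ∀ k t, DifferentiableAt ℝ (fun s => φ s k) t)
    (f : ℝ → Fin N → ℝ)
    (hf : ∀ t k, f t k = σ * ∑ j, a k j * ‖x t j‖ * Real.cos (φ t j - φ t k))
    (u : ℝ → Fin N → ℂ)
    (hu : ∀ t k, u t k = ((|f t k| : ℝ) : ℂ) *
      Complex.exp (Complex.I * ((φ t k + Real.pi / 2 * (1 + Real.sign (f t k)) : ℝ) : ℂ)))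
    (hdyn : ∀ k t, HasDerivAt (fun s => x s k)
      (Complex.I * (ω k : ℂ) * x t k + (σ : ℂ) * ∑ j, (a k j : ℂ) * x t j + u t k) t)
    (hinit : ∀ k, ‖x 0 k‖ = 1) :
    (∀ t ≥ (0 : ℝ), ∀ k, ‖x t k‖ = 1) ∧
    (∀ t ≥ (0 : ℝ), ∀ k, deriv (fun s => φ s k) t
        = ω k + σ * ∑ j, a k j * Real.sin (φ t j - φ t k)) := by
  -- rewrite the control as `u = -f ⬝ exp(iφ)`
  have hu' : ∀ t k, u t k = -(f t k : ℂ) * Complex.exp (Complex.I * (φ t k : ℂ)) := by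
    intro t k
    rw [hu]
    rcases lt_trichotomy (f t k) 0 with h | h | h
    · rw [Real.sign_of_neg h, abs_of_neg h]
      push_cast
      ring_nf
    · simp [h, Real.sign_zero]
    · rw [Real.sign_of_pos h, abs_of_pos h]
      have : Complex.I * ((φ t k + Real.pi / 2 * (1 + 1) : ℝ) : ℂ)
          = Complex.I * (φ t k : ℂ) + Real.pi * Complex.I := by push_cast; ring
      rw [this, Complex.exp_add, Complex.exp_pi_mul_I]
      ring
  -- the auxiliary real quantity g
  set g : ℝ → Fin N → ℝ := fun t k =>
    σ * ∑ j, a k j * ‖x t j‖ * Real.sin (φ t j - φ t k) with hg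
  -- the key derivative computation
  have key : ∀ k t, HasDerivAt (fun s => ((‖x s k‖ : ℝ) : ℂ))
      (Complex.I * ((ω k * ‖x t k‖ + g t k
        - deriv (fun s => φ s k) t * ‖x t k‖ : ℝ) : ℂ)) t := by
    intro k t
    have hφ' : HasDerivAt (fun s => φ s k) (deriv (fun s => φ s k) t) t :=
      (hφ k t).hasDerivAt
    set φ' := deriv (fun s => φ s k) t with hφ'def
    -- derivative of exp(-(I φ))
    have hexp : HasDerivAt (fun s => Complex.exp (-(Complex.I * (φ s k : ℂ))))
        (Complex.exp (-(Complex.I * (φ t k : ℂ))) * (-(Complex.I * (φ' : ℂ)))) t := by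
      have h1 : HasDerivAt (fun s => ((φ s k : ℝ) : ℂ)) (φ' : ℂ) t := hφ'.ofReal_comp
      have h2 : HasDerivAt (fun s => -(Complex.I * ((φ s k : ℝ) : ℂ)))
          (-(Complex.I * (φ' : ℂ))) t := by
        exact (h1.const_mul Complex.I).neg
      exact h2.cexp
    have hh := (hdyn k t).mul hexp
    -- identify the product with the real-valued modulus function
    have heq : (fun s => x s k * Complex.exp (-(Complex.I * (φ s k : ℂ))))
        = fun s => ((‖x s k‖ : ℝ) : ℂ) := by
      funext s
      conv_lhs => rw [hpolar s k]
      rw [mul_assoc, ← Complex.exp_add]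
      simp
    rw [show ((fun s => x s k) * fun s => Complex.exp (-(Complex.I * (φ s k : ℂ)))) = fun s => x s k * Complex.exp (-(Complex.I * (φ s k : ℂ))) from rfl, heq] at hh
    -- now identify the derivative value
    have hval : (Complex.I * (ω k : ℂ) * x t k + (σ : ℂ) * ∑ j, (a k j : ℂ) * x t j + u t k) *
          Complex.exp (-(Complex.I * (φ t k : ℂ))) +
        x t k * (Complex.exp (-(Complex.I * (φ t k : ℂ))) * (-(Complex.I * (φ' : ℂ))))
        = Complex.I * ((ω k * ‖x t k‖ + g t k
            - φ' * ‖x t k‖ : ℝ) : ℂ) := by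
      have hEc : Complex.exp (Complex.I * (φ t k : ℂ)) *
          Complex.exp (-(Complex.I * (φ t k : ℂ))) = 1 := by
        rw [← Complex.exp_add]; simp
      have hxc : x t k * Complex.exp (-(Complex.I * (φ t k : ℂ)))
          = (‖x t k‖ : ℂ) := by
        conv_lhs => rw [hpolar t k]
        rw [mul_assoc, hEc, mul_one]
      -- the coupling sum, term by term
      have hterm : ∀ j, (a k j : ℂ) * x t j * Complex.exp (-(Complex.I * (φ t k : ℂ)))
          = (a k j : ℂ) * (‖x t j‖ : ℂ)
              * Complex.cos ((φ t j : ℂ) - (φ t k : ℂ))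
            + Complex.I * ((a k j : ℂ) * (‖x t j‖ : ℂ)
              * Complex.sin ((φ t j : ℂ) - (φ t k : ℂ))) := by
        intro j
        have hE : Complex.exp (Complex.I * (φ t j : ℂ)) *
            Complex.exp (-(Complex.I * (φ t k : ℂ)))
            = Complex.cos ((φ t j : ℂ) - (φ t k : ℂ))
              + Complex.sin ((φ t j : ℂ) - (φ t k : ℂ)) * Complex.I := by
          rw [← Complex.exp_add]
          have harg : Complex.I * (φ t j : ℂ) + -(Complex.I * (φ t k : ℂ))
              = ((φ t j : ℂ) - (φ t k : ℂ)) * Complex.I := by ring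
          rw [harg, Complex.exp_mul_I]
        conv_lhs => rw [hpolar t j]
        calc (a k j : ℂ) * ((‖x t j‖ : ℂ) * Complex.exp (Complex.I * (φ t j : ℂ)))
              * Complex.exp (-(Complex.I * (φ t k : ℂ)))
            = (a k j : ℂ) * (‖x t j‖ : ℂ)
              * (Complex.exp (Complex.I * (φ t j : ℂ)) *
                 Complex.exp (-(Complex.I * (φ t k : ℂ)))) := by ring
          _ = _ := by rw [hE]; ring
      have hsum : ((σ : ℂ) * ∑ j, (a k j : ℂ) * x t j) *
            Complex.exp (-(Complex.I * (φ t k : ℂ)))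
          = ((f t k : ℝ) : ℂ) + Complex.I * ((g t k : ℝ) : ℂ) := by
        rw [hf, hg]
        push_cast
        rw [mul_assoc, Finset.sum_mul]
        simp only [Finset.mul_sum]
        rw [← Finset.sum_add_distrib]
        apply Finset.sum_congr rfl
        intro j _
        rw [hterm j]
        ring
      rw [hu']
      have hux : -(f t k : ℂ) * Complex.exp (Complex.I * (φ t k : ℂ)) *
          Complex.exp (-(Complex.I * (φ t k : ℂ))) = -(f t k : ℂ) := by
        rw [mul_assoc, hEc, mul_one]
      rw [add_mul, add_mul, hux, hsum]
      have h1 : Complex.I * (ω k : ℂ) * x t k * Complex.exp (-(Complex.I * (φ t k : ℂ)))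
          = Complex.I * (ω k : ℂ) * (‖x t k‖ : ℂ) := by
        rw [mul_assoc, hxc]
      have h2 : x t k * (Complex.exp (-(Complex.I * (φ t k : ℂ))) * (-(Complex.I * (φ' : ℂ))))
          = (‖x t k‖ : ℂ) * (-(Complex.I * (φ' : ℂ))) := by
        rw [← mul_assoc, hxc]
      rw [h1, h2]
      push_cast
      ring
    rw [hval] at hh
    exact hh
  -- real part: modulus has zero derivative
  have habs0 : ∀ k t, HasDerivAt (fun s => ‖x s k‖) 0 t := by
    intro k t
    have h := Complex.reCLM.hasFDerivAt.comp_hasDerivAt t (key k t)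
    simpa [Function.comp_def] using h
  -- imaginary part: the phase equation
  have him : ∀ k t, ω k * ‖x t k‖ + g t k
      - deriv (fun s => φ s k) t * ‖x t k‖ = 0 := by
    intro k t
    have h := Complex.imCLM.hasFDerivAt.comp_hasDerivAt t (key k t)
    have h0 : HasDerivAt (fun s => (((‖x s k‖ : ℝ) : ℂ)).im) 0 t := by
      simp only [Complex.ofReal_im]
      exact hasDerivAt_const t 0
    have huniq := h.unique h0
    simpa using huniq
  -- the modulus is constant, equal to 1
  have hconst : ∀ k t, ‖x t k‖ = 1 := by
    intro k t
    have hd : Differentiable ℝ (fun s => ‖x s k‖) :=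
      fun s => (habs0 k s).differentiableAt
    have hz : ∀ s, deriv (fun s => ‖x s k‖) s = 0 :=
      fun s => (habs0 k s).deriv
    calc ‖x t k‖ = ‖x 0 k‖ :=
          is_const_of_deriv_eq_zero hd hz t 0
    _ = 1 := hinit k
  refine ⟨fun t _ k => hconst k t, fun t _ k => ?_⟩
  have h := him k t
  rw [hconst k t] at h
  have hgv : g t k = σ * ∑ j, a k j * Real.sin (φ t j - φ t k) := by
    rw [hg]
    simp only
    congr 1
    apply Finset.sum_congr rfl
    intro j _
    rw [hconst j t]
    ring
  rw [hgv] at h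
  linarith
end

section
/- Suppose x: ℝ → ℂ^N is differentiable, satisfies ẋ = (i diag(ω) + σA)x, and |x_k(t)| = c > 0 for all k and t (constant common modulus). Then the arguments θ_k(t) = arg x_k(t) satisfy the real Kuramoto model θ̇_k = ω_k + σ ∑_j a_{kj} sin(θ_j − θ_k). -/
/-- If `x` solves the linear complex model `ẋ = (i diag(ω) + σA)x` with a
constant common modulus `|x_k(t)| = c > 0`, then the (continuous) arguments
`θ_k` satisfy the real Kuramoto model
`θ̇_k = ω_k + σ ∑_j a_{kj} sin(θ_j − θ_k)`. -/
theorem stmt17 (N : ℕ) (ω : Fin N → ℝ) (σ : ℝ) (hσ : 0 < σ)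
    (a : Fin N → Fin N → ℝ) (hdiag : ∀ k, a k k = 0)
    (c : ℝ) (hc : 0 < c)
    (x : ℝ → Fin N → ℂ) (θ : ℝ → Fin N → ℝ)
    (hdyn : ∀ k t, HasDerivAt (fun s => x s k)
      (Complex.I * (ω k : ℂ) * x t k + (σ : ℂ) * ∑ j, (a k j : ℂ) * x t j) t)
    (hmod : ∀ t k, ‖x t k‖ = c)
    (hpolar : ∀ t k, x t k = (c : ℂ) * Complex.exp (Complex.I * (θ t k : ℂ)))
    (hθ : ∀ k t, DifferentiableAt ℝ (fun s => θ s k) t) :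
    ∀ k t, deriv (fun s => θ s k) t
      = ω k + σ * ∑ j, a k j * Real.sin (θ t j - θ t k) := by
  intro k t
  set d := deriv (fun s => θ s k) t with hd
  have hθd : HasDerivAt (fun s => θ s k) d t := (hθ k t).hasDerivAt
  have h1 : HasDerivAt (fun s => (c:ℂ) * Complex.exp (Complex.I * (θ s k : ℂ)))
      ((c:ℂ) * (Complex.exp (Complex.I * (θ t k : ℂ)) * (Complex.I * d))) t := by
    have := (((hθd.ofReal_comp).const_mul Complex.I).cexp).const_mul (c:ℂ)
    simpa [mul_comm, mul_assoc, mul_left_comm] using this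
  have h2 : HasDerivAt (fun s => x s k)
      ((c:ℂ) * (Complex.exp (Complex.I * (θ t k : ℂ)) * (Complex.I * d))) t := by
    have hfun : (fun s => x s k) = fun s => (c:ℂ) * Complex.exp (Complex.I * (θ s k : ℂ)) :=
      funext fun s => hpolar s k
    rw [hfun]; exact h1
  have E := (hdyn k t).unique h2
  simp only [hpolar t] at E
  have E' := congrArg (fun z => z * Complex.exp (-(Complex.I * (θ t k : ℂ)))) E
  simp only [Finset.sum_mul, add_mul, mul_assoc, ← Complex.exp_add] at E'
  have hkey : ∀ j : Fin N, Complex.I * (θ t j : ℂ) + -(Complex.I * (θ t k : ℂ))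
      = Complex.I * ((θ t j - θ t k : ℝ) : ℂ) := by
    intro j; push_cast; ring
  rw [add_neg_cancel, Complex.exp_zero, mul_one] at E'
  simp only [hkey] at E'
  have hone : Complex.exp (Complex.I * (θ t k : ℂ)) * Complex.exp (-(Complex.I * (θ t k : ℂ))) = 1 := by
    rw [← Complex.exp_add, add_neg_cancel, Complex.exp_zero]
  have hR : Complex.exp (Complex.I * (θ t k : ℂ)) * (Complex.I * ((d:ℂ) * Complex.exp (-(Complex.I * (θ t k : ℂ))))) = Complex.I * (d:ℂ) := by
    linear_combination (Complex.I * (d:ℂ)) * hone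
  rw [hR] at E'
  have Eim := congrArg Complex.im E'
  simp only [Complex.add_im, Complex.mul_im, Complex.mul_re, Complex.I_re, Complex.I_im,
    Complex.ofReal_re, Complex.ofReal_im, Complex.im_sum, Complex.exp_im, Complex.exp_re,
    Complex.ofReal_mul, Complex.ofReal_sub] at Eim
  simp only [Complex.sub_re, Complex.sub_im, Complex.ofReal_re, Complex.ofReal_im, zero_mul,
    one_mul, mul_zero, zero_add, add_zero, sub_zero, zero_sub, Real.exp_zero, mul_one] at Eim
  have hsum : ∑ j, a k j * (c * Real.sin (θ t j - θ t k))
      = c * ∑ j, a k j * Real.sin (θ t j - θ t k) := by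
    rw [Finset.mul_sum]; exact Finset.sum_congr rfl fun j _ => by ring
  rw [hsum] at Eim
  have hc' : c ≠ 0 := hc.ne'
  refine mul_left_cancel₀ hc' ?_
  linear_combination -Eim
end

section
/- Let u¹ be the feedforward law (|u¹_k| = |f_k(x)|, φ_{u¹_k} = φ_{x_k} + (π/2)(1 + sign f_k(x))) and u² the SMC law (|u²_k| = α|sign(|x_k| − 1)|, φ_{u²_k} = φ_{x_k} + (π/2)(1 + sign(|x_k| − 1))) with α > 0. Then along solutions of ẋ_k = iω_k x_k + σ∑_j a_{kj}x_j + u¹_k + u²_k (with x_k ≠ 0), the moduli satisfy d/dt |x_k| = −α sign(|x_k| − 1), and the control contributes zero to d/dt arg x_k, i.e., d/dt arg x_k = ω_k + σ∑_j a_{kj}(|x_j|/|x_k|) sin(arg x_j − arg x_k). -/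
open Complex

/-- The key cancellation: a control of magnitude `β * |s|` and phase shift
`(π/2)(1+s)` (for `s ∈ {-1,0,1}`) contributes `-(β*s)` after removing the
phase factor. -/
lemma key1 (β s : ℝ) (hs : s = -1 ∨ s = 0 ∨ s = 1) :
    ((β * |s| : ℝ) : ℂ) * Complex.exp (Complex.I * ((Real.pi / 2 * (1 + s) : ℝ) : ℂ))
      = ((-(β * s) : ℝ) : ℂ) := by
  rcases hs with h | h | h <;> subst h
  · norm_num
  · norm_num
  · norm_num
    rw [mul_comm Complex.I, Complex.exp_pi_mul_I]
    ring

lemma abs_mul_rsign (f : ℝ) : |f| * Real.sign f = f := by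
  rcases lt_trichotomy f 0 with h | h | h
  · rw [Real.sign_of_neg h, abs_of_neg h]; ring
  · subst h; simp
  · rw [Real.sign_of_pos h, abs_of_pos h]; ring

/-- Polar derivative decomposition:  if `x = r e^{iφ}` with `φ` differentiable
and `x` has derivative `D`, then `r` has derivative `(D e^{-iφ}).re` and
`r · φ' = (D e^{-iφ}).im`. -/
lemma polar_deriv (x : ℝ → ℂ) (φ : ℝ → ℝ) (t : ℝ) (D : ℂ)
    (hx : HasDerivAt x D t) (hφ : DifferentiableAt ℝ φ t)
    (hpolar : ∀ s, x s = (‖x s‖ : ℂ) * Complex.exp (Complex.I * (φ s : ℂ))) :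
    HasDerivAt (fun s => ‖x s‖)
        ((D * Complex.exp (-(Complex.I * (φ t : ℂ)))).re) t ∧
      (‖x t‖) * deriv φ t
        = (D * Complex.exp (-(Complex.I * (φ t : ℂ)))).im := by
  set φ' : ℝ := deriv φ t with hφ'def
  have hφ' : HasDerivAt φ φ' t := hφ.hasDerivAt
  -- the exponential factor
  have hexp : HasDerivAt (fun s => Complex.exp (-(Complex.I * (φ s : ℂ))))
      (Complex.exp (-(Complex.I * (φ t : ℂ))) * (-(Complex.I * (φ' : ℂ)))) t := by
    have h1 : HasDerivAt (fun s : ℝ => -(Complex.I * ((φ s : ℝ) : ℂ)))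
        (-(Complex.I * (φ' : ℂ))) t := by
      have := (hφ'.ofReal_comp).const_mul Complex.I
      exact this.neg
    exact h1.cexp
  have hg : HasDerivAt (fun s => x s * Complex.exp (-(Complex.I * (φ s : ℂ))))
      (D * Complex.exp (-(Complex.I * (φ t : ℂ)))
        + x t * (Complex.exp (-(Complex.I * (φ t : ℂ))) * (-(Complex.I * (φ' : ℂ))))) t :=
    hx.mul hexp
  have hxE : ∀ s, x s * Complex.exp (-(Complex.I * (φ s : ℂ)))
      = ((‖x s‖ : ℝ) : ℂ) := by
    intro s
    conv_lhs => rw [hpolar s]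
    rw [mul_assoc, ← Complex.exp_add]
    simp
  set c : ℂ := D * Complex.exp (-(Complex.I * (φ t : ℂ))) with hc
  have hxEt : x t * Complex.exp (-(Complex.I * (φ t : ℂ)))
      = ((‖x t‖ : ℝ) : ℂ) := hxE t
  have hg' : HasDerivAt (fun s => ((‖x s‖ : ℝ) : ℂ))
      (c + ((‖x t‖ : ℝ) : ℂ) * (-(Complex.I * (φ' : ℂ)))) t := by
    have h2 := hg.congr_of_eventuallyEq
      (Filter.Eventually.of_forall fun s => (hxE s).symm)
    refine h2.congr_deriv ?_
    rw [hc, ← hxEt]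
    ring
  -- real part: derivative of the modulus
  have hre : HasDerivAt (fun s => ‖x s‖)
      ((c + ((‖x t‖ : ℝ) : ℂ) * (-(Complex.I * (φ' : ℂ)))).re) t := by
    have := Complex.reCLM.hasFDerivAt.comp_hasDerivAt t hg'
    simpa [Function.comp_def] using this
  have him : HasDerivAt (fun s => (((‖x s‖ : ℝ) : ℂ)).im)
      ((c + ((‖x t‖ : ℝ) : ℂ) * (-(Complex.I * (φ' : ℂ)))).im) t := by
    have := Complex.imCLM.hasFDerivAt.comp_hasDerivAt t hg'
    simpa [Function.comp_def] using this
  have him0 : (c + ((‖x t‖ : ℝ) : ℂ) * (-(Complex.I * (φ' : ℂ)))).im = 0 := by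
    have hconst : HasDerivAt (fun _ : ℝ => (0 : ℝ)) 0 t := hasDerivAt_const t 0
    have heq : (fun s => (((‖x s‖ : ℝ) : ℂ)).im) = fun _ : ℝ => (0 : ℝ) := by
      funext s; simp
    rw [heq] at him
    exact him.unique hconst
  have hrepart : (c + ((‖x t‖ : ℝ) : ℂ) * (-(Complex.I * (φ' : ℂ)))).re = c.re := by
    simp
  constructor
  · rw [← hrepart]; exact hre
  · have : c.im - ‖x t‖ * φ' = 0 := by
      have := him0
      simp at this
      linarith [this]
    linarith [this]

/-- Closed-loop decomposition of Theorem 2 (feedforward + SMC): under the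
combined control `u¹ + u²`, the moduli satisfy
`d/dt |x_k| = −α sign(|x_k| − 1)` and the controls contribute nothing to
the arguments, which satisfy
`d/dt arg x_k = ω_k + σ ∑_j a_{kj}(|x_j|/|x_k|) sin(arg x_j − arg x_k)`. -/
theorem stmt19 (N : ℕ) (ω : Fin N → ℝ) (σ α : ℝ) (hσ : 0 < σ) (hα : 0 < α)
    (a : Fin N → Fin N → ℝ)
    (hA : ∀ k j, a k j = 0 ∨ a k j = 1) (hdiag : ∀ k, a k k = 0)
    (x : ℝ → Fin N → ℂ) (φ : ℝ → Fin N → ℝ)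
    (hne : ∀ t k, x t k ≠ 0)
    (hpolar : ∀ t k, x t k = (‖x t k‖ : ℂ) * Complex.exp (Complex.I * (φ t k : ℂ)))
    (hφ : ∀ k t, DifferentiableAt ℝ (fun s => φ s k) t)
    (f : ℝ → Fin N → ℝ)
    (hf : ∀ t k, f t k = σ * ∑ j, a k j * ‖x t j‖ * Real.cos (φ t j - φ t k))
    (u₁ u₂ : ℝ → Fin N → ℂ)
    (hu₁ : ∀ t k, u₁ t k = ((|f t k| : ℝ) : ℂ) *
      Complex.exp (Complex.I * ((φ t k + Real.pi / 2 * (1 + Real.sign (f t k)) : ℝ) : ℂ)))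
    (hu₂ : ∀ t k, u₂ t k = ((α * |Real.sign (‖x t k‖ - 1)| : ℝ) : ℂ) *
      Complex.exp (Complex.I *
        ((φ t k + Real.pi / 2 * (1 + Real.sign (‖x t k‖ - 1)) : ℝ) : ℂ)))
    (hdyn : ∀ k t, HasDerivAt (fun s => x s k)
      (Complex.I * (ω k : ℂ) * x t k + (σ : ℂ) * ∑ j, (a k j : ℂ) * x t j
        + u₁ t k + u₂ t k) t) :
    (∀ k t, HasDerivAt (fun s => ‖x s k‖)
        (-α * Real.sign (‖x t k‖ - 1)) t) ∧
    (∀ k t, deriv (fun s => φ s k) t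
        = ω k + σ * ∑ j, a k j * (‖x t j‖ / ‖x t k‖) *
            Real.sin (φ t j - φ t k)) := by
  -- abbreviations
  have main : ∀ k t,
      (Complex.I * (ω k : ℂ) * x t k + (σ : ℂ) * ∑ j, (a k j : ℂ) * x t j
          + u₁ t k + u₂ t k) * Complex.exp (-(Complex.I * (φ t k : ℂ)))
        = Complex.ofReal (-α * Real.sign (‖x t k‖ - 1))
          + Complex.I * Complex.ofReal (ω k * ‖x t k‖
              + σ * ∑ j, a k j * ‖x t j‖ * Real.sin (φ t j - φ t k)) := by
    intro k t
    set E : ℂ := Complex.exp (-(Complex.I * (φ t k : ℂ))) with hE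
    have hxE : ∀ j, x t j * E
        = ((‖x t j‖ : ℝ) : ℂ) * Complex.exp (Complex.I * ((φ t j - φ t k : ℝ) : ℂ)) := by
      intro j
      conv_lhs => rw [hpolar t j]
      rw [mul_assoc, hE, ← Complex.exp_add]
      congr 2
      push_cast; ring
    have hterm1 : Complex.I * (ω k : ℂ) * x t k * E
        = Complex.I * Complex.ofReal (ω k * ‖x t k‖) := by
      have := hxE k
      simp only [sub_self] at this
      rw [mul_assoc, this]
      push_cast
      simp
      ring
    have hterm3 : u₁ t k * E = ((-(f t k) : ℝ) : ℂ) := by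
      rw [hu₁ t k]
      have hsplit : Complex.exp (Complex.I *
          ((φ t k + Real.pi / 2 * (1 + Real.sign (f t k)) : ℝ) : ℂ)) * E
          = Complex.exp (Complex.I * ((Real.pi / 2 * (1 + Real.sign (f t k)) : ℝ) : ℂ)) := by
        rw [hE, ← Complex.exp_add]
        congr 1
        push_cast; ring
      rw [mul_assoc, hsplit]
      have : ((|f t k| : ℝ) : ℂ) = ((|f t k| * |Real.sign (f t k)| : ℝ) : ℂ) := by
        rcases eq_or_ne (f t k) 0 with h | h
        · simp [h]
        · rcases Real.sign_apply_eq_of_ne_zero _ h with hs | hs <;> rw [hs] <;> norm_num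
      rw [this, key1 _ _ (Real.sign_apply_eq _)]
      rw [abs_mul_rsign]
    have hterm4 : u₂ t k * E
        = ((-(α * Real.sign (‖x t k‖ - 1)) : ℝ) : ℂ) := by
      rw [hu₂ t k]
      have hsplit : Complex.exp (Complex.I *
          ((φ t k + Real.pi / 2 * (1 + Real.sign (‖x t k‖ - 1)) : ℝ) : ℂ)) * E
          = Complex.exp (Complex.I *
              ((Real.pi / 2 * (1 + Real.sign (‖x t k‖ - 1)) : ℝ) : ℂ)) := by
        rw [hE, ← Complex.exp_add]
        congr 1
        push_cast; ring
      rw [mul_assoc, hsplit]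
      exact key1 _ _ (Real.sign_apply_eq _)
    have hterm2 : ((σ : ℂ) * ∑ j, (a k j : ℂ) * x t j) * E
        = Complex.ofReal (f t k)
          + Complex.I * Complex.ofReal
              (σ * ∑ j, a k j * ‖x t j‖ * Real.sin (φ t j - φ t k)) := by
      rw [hf t k]
      rw [mul_assoc, Finset.sum_mul]
      have : ∀ j ∈ Finset.univ, (a k j : ℂ) * x t j * E
          = Complex.ofReal (a k j * ‖x t j‖ * Real.cos (φ t j - φ t k))
            + Complex.I * Complex.ofReal
                (a k j * ‖x t j‖ * Real.sin (φ t j - φ t k)) := by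
        intro j _
        rw [mul_assoc, hxE j, mul_comm Complex.I ((φ t j - φ t k : ℝ) : ℂ),
          Complex.exp_mul_I, ← Complex.ofReal_cos, ← Complex.ofReal_sin]
        push_cast
        ring
      rw [Finset.sum_congr rfl this]
      rw [Finset.sum_add_distrib]
      push_cast
      simp only [mul_add, Finset.mul_sum]
      congr 1 <;> exact Finset.sum_congr rfl fun j _ => by ring
    have expand : (Complex.I * (ω k : ℂ) * x t k + (σ : ℂ) * ∑ j, (a k j : ℂ) * x t j
        + u₁ t k + u₂ t k) * E
        = Complex.I * (ω k : ℂ) * x t k * E + ((σ : ℂ) * ∑ j, (a k j : ℂ) * x t j) * E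
          + u₁ t k * E + u₂ t k * E := by ring
    rw [expand, hterm1, hterm2, hterm3, hterm4]
    push_cast
    ring
  -- apply the polar derivative lemma
  have pd : ∀ k t,
      HasDerivAt (fun s => ‖x s k‖)
        (((Complex.I * (ω k : ℂ) * x t k + (σ : ℂ) * ∑ j, (a k j : ℂ) * x t j
          + u₁ t k + u₂ t k) * Complex.exp (-(Complex.I * (φ t k : ℂ)))).re) t ∧
      (‖x t k‖) * deriv (fun s => φ s k) t
        = ((Complex.I * (ω k : ℂ) * x t k + (σ : ℂ) * ∑ j, (a k j : ℂ) * x t j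
          + u₁ t k + u₂ t k) * Complex.exp (-(Complex.I * (φ t k : ℂ)))).im := by
    intro k t
    exact polar_deriv (fun s => x s k) (fun s => φ s k) t _ (hdyn k t) (hφ k t)
      (fun s => hpolar s k)
  constructor
  · intro k t
    have h := (pd k t).1
    rw [main k t] at h
    simp only [Complex.add_re, Complex.ofReal_re, Complex.mul_re, Complex.I_re, Complex.I_im,
      Complex.ofReal_im, zero_mul, one_mul, mul_zero, sub_zero, zero_sub, add_zero,
      neg_zero] at h
    convert h using 1
  · intro k t
    have h := (pd k t).2
    rw [main k t] at h
    simp only [Complex.add_im, Complex.ofReal_im, Complex.mul_im, Complex.I_re, Complex.I_im,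
      Complex.ofReal_re, zero_mul, one_mul, zero_add, add_zero, mul_zero] at h
    have hr : ‖x t k‖ ≠ 0 := norm_ne_zero_iff.mpr (hne t k)
    have hsum : σ * ∑ j, a k j * (‖x t j‖ / ‖x t k‖) *
        Real.sin (φ t j - φ t k)
        = (σ * ∑ j, a k j * ‖x t j‖ * Real.sin (φ t j - φ t k))
            / ‖x t k‖ := by
      rw [Finset.mul_sum, Finset.mul_sum, Finset.sum_div]
      exact Finset.sum_congr rfl fun j _ => by ring
    have h2 : deriv (fun s => φ s k) t
        = (‖x t k‖ * deriv (fun s => φ s k) t) / ‖x t k‖ := by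
      field_simp
    rw [h2, h, hsum, add_div]
    congr 1
    field_simp
end
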